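/- Fix positive integers d1, d2 and let μ = inf { |g1·g2|_2 : g1, g2 ∈ ℝ[x], deg g1 = d1, deg g2 = d2, |g1|_2 = |g2|_2 = 1 }. Then μ > 0. -/

import Mathlib

open Polynomial

/-- The `l2`-norm of the coefficient vector of a real polynomial. -/
noncomputable def l2NormR (p : Polynomial ℝ) : ℝ :=
  Real.sqrt (∑ i ∈ Finset.range (p.natDegree + 1), (p.coeff i) ^ 2)

namespace RumpAux

noncomputable def toPoly {n : ℕ} (a : EuclideanSpace ℝ (Fin n)) : Polynomial ℝ :=
  ∑ i : Fin n, Polynomial.monomial i.val (a i)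

lemma toPoly_coeff {n : ℕ} (a : EuclideanSpace ℝ (Fin n)) (j : ℕ) :
    (toPoly a).coeff j = if h : j < n then a ⟨j, h⟩ else 0 := by
  simp only [toPoly, Polynomial.finset_sum_coeff, Polynomial.coeff_monomial]
  split
  · next h =>
    rw [Finset.sum_eq_single (⟨j, h⟩ : Fin n)]
    · simp
    · intro i _ hi
      have : (i : ℕ) ≠ j := fun hc => hi (Fin.ext hc)
      simp [this]
    · simp
  · next h =>
    apply Finset.sum_eq_zero
    intro i _
    have : (i : ℕ) ≠ j := by omega
    simp [this]

lemma continuous_coeff {n : ℕ} (j : ℕ) :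
    Continuous (fun a : EuclideanSpace ℝ (Fin n) => (toPoly a).coeff j) := by
  simp only [toPoly_coeff]
  by_cases h : j < n
  · simp only [dif_pos h]
    exact (EuclideanSpace.proj (⟨j, h⟩ : Fin n)).continuous
  · simp only [dif_neg h]
    exact continuous_const

lemma toPoly_ne_zero {n : ℕ} (a : EuclideanSpace ℝ (Fin n)) (ha : ‖a‖ = 1) :
    toPoly a ≠ 0 := by
  intro hz
  have : a = 0 := by
    ext i
    have := toPoly_coeff a i
    rw [hz] at this
    simpa [i.isLt] using this.symm
  rw [this] at ha
  simp at ha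

lemma natDegree_toPoly_le {n : ℕ} (a : EuclideanSpace ℝ (Fin (n + 1))) :
    (toPoly a).natDegree ≤ n := by
  apply Polynomial.natDegree_le_iff_coeff_eq_zero.2
  intro j hj
  rw [toPoly_coeff]
  have : ¬ j < n + 1 := by omega
  simp [this]

lemma toPoly_eq {n : ℕ} (p : Polynomial ℝ) (hp : p.natDegree = n) :
    toPoly (WithLp.toLp 2 (fun i : Fin (n + 1) => p.coeff i)) = p := by
  have h : p.natDegree < n + 1 := by omega
  conv_rhs => rw [Polynomial.as_sum_range' p (n + 1) h]
  rw [toPoly]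
  simp only [PiLp.toLp_apply]
  rw [Fin.sum_univ_eq_sum_range (fun i => Polynomial.monomial i (p.coeff i))]

end RumpAux

open RumpAux in
/-- Rump's minimum: the infimum of `|g₁·g₂|₂` over real polynomials of fixed
degrees `d1, d2` with `|g₁|₂ = |g₂|₂ = 1` is strictly positive. -/
theorem rump_min_pos (d1 d2 : ℕ) (h1 : 1 ≤ d1) (h2 : 1 ≤ d2) :
    0 < sInf { r : ℝ | ∃ g1 g2 : Polynomial ℝ,
      g1.natDegree = d1 ∧ g2.natDegree = d2 ∧
      l2NormR g1 = 1 ∧ l2NormR g2 = 1 ∧ r = l2NormR (g1 * g2) } := by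
  set S := { r : ℝ | ∃ g1 g2 : Polynomial ℝ,
      g1.natDegree = d1 ∧ g2.natDegree = d2 ∧
      l2NormR g1 = 1 ∧ l2NormR g2 = 1 ∧ r = l2NormR (g1 * g2) } with hS
  -- the squared-norm function
  set F : EuclideanSpace ℝ (Fin (d1 + 1)) × EuclideanSpace ℝ (Fin (d2 + 1)) → ℝ :=
    fun x => ∑ i ∈ Finset.range (d1 + d2 + 1), ((toPoly x.1 * toPoly x.2).coeff i) ^ 2 with hF
  have hFcont : Continuous F := by
    apply continuous_finset_sum
    intro i _
    have : (fun x : EuclideanSpace ℝ (Fin (d1 + 1)) × EuclideanSpace ℝ (Fin (d2 + 1)) =>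
        (toPoly x.1 * toPoly x.2).coeff i) =
        fun x => ∑ jk ∈ Finset.HasAntidiagonal.antidiagonal i,
          (toPoly x.1).coeff jk.1 * (toPoly x.2).coeff jk.2 := by
      funext x; rw [Polynomial.coeff_mul]
    have hc : Continuous (fun x : EuclideanSpace ℝ (Fin (d1 + 1)) × EuclideanSpace ℝ (Fin (d2 + 1)) =>
        (toPoly x.1 * toPoly x.2).coeff i) := by
      rw [this]
      exact continuous_finset_sum _ (fun jk _ =>
        ((continuous_coeff jk.1).comp continuous_fst).mul
          ((continuous_coeff jk.2).comp continuous_snd))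
    exact hc.pow 2
  -- the compact domain
  set K : Set (EuclideanSpace ℝ (Fin (d1 + 1)) × EuclideanSpace ℝ (Fin (d2 + 1))) :=
    (Metric.sphere 0 1) ×ˢ (Metric.sphere 0 1) with hK
  have hKcomp : IsCompact K :=
    (isCompact_sphere _ _).prod (isCompact_sphere _ _)
  have hKne : K.Nonempty := by
    refine ⟨(EuclideanSpace.single 0 1, EuclideanSpace.single 0 1), ?_, ?_⟩ <;>
      simp [mem_sphere_iff_norm, EuclideanSpace.norm_single]
  -- F is positive on K
  have hFpos : ∀ x ∈ K, 0 < F x := by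
    rintro ⟨a, b⟩ hx
    obtain ⟨ha, hb⟩ := hx
    rw [mem_sphere_iff_norm, sub_zero] at ha hb
    have hpa : toPoly a ≠ 0 := toPoly_ne_zero a ha
    have hpb : toPoly b ≠ 0 := toPoly_ne_zero b hb
    have hp : toPoly a * toPoly b ≠ 0 := mul_ne_zero hpa hpb
    have hdeg : (toPoly a * toPoly b).natDegree ≤ d1 + d2 :=
      le_trans (Polynomial.natDegree_mul_le) (add_le_add (natDegree_toPoly_le a) (natDegree_toPoly_le b))
    apply Finset.sum_pos'
    · intro i _; positivity
    · refine ⟨(toPoly a * toPoly b).natDegree, Finset.mem_range.2 (by omega), ?_⟩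
      have : (toPoly a * toPoly b).coeff (toPoly a * toPoly b).natDegree ≠ 0 := by
        rw [← Polynomial.leadingCoeff]
        exact Polynomial.leadingCoeff_ne_zero.2 hp
      positivity
  -- minimum
  obtain ⟨x0, hx0K, hmin⟩ := hKcomp.exists_isMinOn hKne hFcont.continuousOn
  have hm : 0 < F x0 := hFpos x0 hx0K
  -- lower bound for all elements of S
  have hlb : ∀ r ∈ S, Real.sqrt (F x0) ≤ r := by
    rintro r ⟨g1, g2, hg1, hg2, hn1, hn2, hr⟩
    set a : EuclideanSpace ℝ (Fin (d1 + 1)) := WithLp.toLp 2 (fun i => g1.coeff i) with ha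
    set b : EuclideanSpace ℝ (Fin (d2 + 1)) := WithLp.toLp 2 (fun i => g2.coeff i) with hb
    have hta : toPoly a = g1 := toPoly_eq g1 hg1
    have htb : toPoly b = g2 := toPoly_eq g2 hg2
    have hmema : a ∈ Metric.sphere (0 : EuclideanSpace ℝ (Fin (d1 + 1))) 1 := by
      rw [mem_sphere_iff_norm, sub_zero, EuclideanSpace.norm_eq]
      have : ∑ i : Fin (d1 + 1), ‖a i‖ ^ 2 = ∑ i ∈ Finset.range (d1 + 1), (g1.coeff i) ^ 2 := by
        rw [← Fin.sum_univ_eq_sum_range (fun i => (g1.coeff i) ^ 2)]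
        apply Finset.sum_congr rfl
        intro i _
        rw [ha]; simp [sq_abs]
      rw [this, ← hg1]
      exact hn1
    have hmemb : b ∈ Metric.sphere (0 : EuclideanSpace ℝ (Fin (d2 + 1))) 1 := by
      rw [mem_sphere_iff_norm, sub_zero, EuclideanSpace.norm_eq]
      have : ∑ i : Fin (d2 + 1), ‖b i‖ ^ 2 = ∑ i ∈ Finset.range (d2 + 1), (g2.coeff i) ^ 2 := by
        rw [← Fin.sum_univ_eq_sum_range (fun i => (g2.coeff i) ^ 2)]
        apply Finset.sum_congr rfl
        intro i _
        rw [hb]; simp [sq_abs]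
      rw [this, ← hg2]
      exact hn2
    have hrF : r = Real.sqrt (F (a, b)) := by
      rw [hr, l2NormR, hF]
      congr 1
      simp only [hta, htb]
      apply Finset.sum_subset
      · apply Finset.range_subset_range.2
        have := Polynomial.natDegree_mul_le (p := g1) (q := g2)
        omega
      · intro i _ hi
        rw [Finset.mem_range, not_lt] at hi
        have : (g1 * g2).coeff i = 0 :=
          Polynomial.coeff_eq_zero_of_natDegree_lt (by omega)
        simp [this]
    rw [hrF]
    exact Real.sqrt_le_sqrt (hmin (Set.mk_mem_prod hmema hmemb))
  -- S is nonempty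
  have hXnorm : ∀ n : ℕ, l2NormR ((Polynomial.X : Polynomial ℝ) ^ n) = 1 := by
    intro n
    rw [l2NormR, Polynomial.natDegree_X_pow]
    have : ∑ i ∈ Finset.range (n + 1), ((Polynomial.X : Polynomial ℝ) ^ n).coeff i ^ 2 = 1 := by
      rw [Finset.sum_eq_single n]
      · simp [Polynomial.coeff_X_pow]
      · intro i _ hi; simp [Polynomial.coeff_X_pow, hi]
      · intro h; exact absurd (Finset.self_mem_range_succ n) h
    rw [this, Real.sqrt_one]
  have hSne : S.Nonempty := by
    refine ⟨1, Polynomial.X ^ d1, Polynomial.X ^ d2, ?_, ?_, hXnorm d1, hXnorm d2, ?_⟩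
    · exact Polynomial.natDegree_X_pow d1
    · exact Polynomial.natDegree_X_pow d2
    · rw [← pow_add, hXnorm (d1 + d2)]
  calc (0 : ℝ) < Real.sqrt (F x0) := Real.sqrt_pos.2 hm
    _ ≤ sInf S := le_csInf hSne hlb
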